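/- Assume each v_i is strictly concave (so v_i' is strictly decreasing on [0,∞)). Call a profile q ≥ 0 with ‖q‖ > 0 a non-strategic equilibrium under average-cost pricing if for every i, v_i'(q_i) ≤ p(‖q‖), with equality whenever q_i > 0. Then the non-strategic equilibrium under average-cost pricing is unique: if q̃ and q̂ are both non-strategic equilibria, then q̃ = q̂. -/
import Mathlib


open Finset Set

/-- Strict antitonicity of the derivative of a strictly concave function. -/
lemma deriv_strictAnti {f f' : ℝ → ℝ}
    (hd : ∀ x, HasDerivAt f (f' x) x)
    (hc : StrictConcaveOn ℝ (Ici (0 : ℝ)) f)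
    {a b : ℝ} (ha : 0 ≤ a) (hb : 0 ≤ b) (hab : a < b) :
    f' b < f' a :=
  (hc.lt_slope_of_hasDerivAt ha hb hab (hd b)).trans
    (hc.slope_lt_of_hasDerivAt ha hb hab (hd a))

/-- With strictly concave valuations, the non-strategic
equilibrium under average-cost pricing (every consumer's marginal valuation
is at most the price, with equality at positive demand) is unique. -/
theorem statement_1
    (N : ℕ) (v v' : Fin N → ℝ → ℝ) (C : ℝ → ℝ)
    (hv_deriv : ∀ i x, HasDerivAt (v i) (v' i x) x)
    (hv_sconcave : ∀ i, StrictConcaveOn ℝ (Ici (0 : ℝ)) (v i))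
    (hv_mono : ∀ i, MonotoneOn (v i) (Ici (0 : ℝ)))
    (hv0 : ∀ i, v i 0 = 0)
    (hC_diff : DifferentiableOn ℝ C (Ici (0 : ℝ)))
    (hC_sconvex : StrictConvexOn ℝ (Ici (0 : ℝ)) C)
    (hC0 : C 0 = 0)
    (hCpos : ∀ g : ℝ, 0 < g → 0 < C g)
    (p : ℝ → ℝ) (hp : ∀ g : ℝ, 0 < g → p g = C g / g)
    (hp_mono : MonotoneOn p (Ioi (0 : ℝ)))
    (qt qh : Fin N → ℝ)
    (hqt_nonneg : ∀ i, 0 ≤ qt i) (hqt_pos : 0 < ∑ i, qt i)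
    (hqt_le : ∀ i, v' i (qt i) ≤ p (∑ i, qt i))
    (hqt_eq : ∀ i, 0 < qt i → v' i (qt i) = p (∑ i, qt i))
    (hqh_nonneg : ∀ i, 0 ≤ qh i) (hqh_pos : 0 < ∑ i, qh i)
    (hqh_le : ∀ i, v' i (qh i) ≤ p (∑ i, qh i))
    (hqh_eq : ∀ i, 0 < qh i → v' i (qh i) = p (∑ i, qh i)) :
    qt = qh := by
  -- key step: if the total demand of one equilibrium is ≤ the other's,
  -- then the latter is pointwise ≤ the former.
  have key : ∀ (a b : Fin N → ℝ), (∀ i, 0 ≤ a i) → 0 < ∑ i, a i →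
      (∀ i, v' i (a i) ≤ p (∑ i, a i)) →
      (∀ i, 0 ≤ b i) → 0 < ∑ i, b i →
      (∀ i, 0 < b i → v' i (b i) = p (∑ i, b i)) →
      (∑ i, a i) ≤ (∑ i, b i) → ∀ i, b i ≤ a i := by
    intro a b ha_nn ha_pos ha_le hb_nn hb_pos hb_eq hsum i
    by_contra h
    push_neg at h
    have hbpos : 0 < b i := lt_of_le_of_lt (ha_nn i) h
    have h1 : v' i (b i) = p (∑ i, b i) := hb_eq i hbpos
    have h2 : p (∑ i, a i) ≤ p (∑ i, b i) := hp_mono ha_pos hb_pos hsum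
    have h3 : v' i (b i) < v' i (a i) :=
      deriv_strictAnti (hv_deriv i) (hv_sconcave i) (ha_nn i) (le_of_lt hbpos) h
    have := (ha_le i).trans h2
    rw [h1] at h3
    linarith
  rcases le_total (∑ i, qt i) (∑ i, qh i) with hle | hle
  · have h1 : ∀ i, qh i ≤ qt i :=
      key qt qh hqt_nonneg hqt_pos hqt_le hqh_nonneg hqh_pos hqh_eq hle
    have hsum : ∑ i, qt i = ∑ i, qh i :=
      le_antisymm hle (Finset.sum_le_sum fun i _ => h1 i)
    funext i
    exact ((Finset.sum_eq_sum_iff_of_le (fun i _ => h1 i)).mp hsum.symm i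
      (Finset.mem_univ i)).symm
  · have h1 : ∀ i, qt i ≤ qh i :=
      key qh qt hqh_nonneg hqh_pos hqh_le hqt_nonneg hqt_pos hqt_eq hle
    have hsum : ∑ i, qh i = ∑ i, qt i :=
      le_antisymm hle (Finset.sum_le_sum fun i _ => h1 i)
    funext i
    exact (Finset.sum_eq_sum_iff_of_le (fun i _ => h1 i)).mp hsum.symm i
      (Finset.mem_univ i)
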